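/- Let P be a finite ordered set with a minimal element a such that a is not maximal in P and every upper cover of a in P is a minimal element of P ∖ {a}, and let x, y be two incomparable elements of P ∖ {a}. The map φ sending a greedy linear extension L of P that puts x before y to the greedy linear extension L ∖ {a} of P ∖ {a} (obtained by deleting a from L) is a bijection from the set of greedy linear extensions of P putting x before y onto the set of greedy linear extensions of P ∖ {a} putting x before y. -/

import Mathlib

variable {α : Type*}

/-- `x` is a minimal element of the subposet induced on the finite set `s`. -/
def IsMinimalIn [PartialOrder α] (s : Finset α) (x : α) : Prop :=
  x ∈ s ∧ ∀ y ∈ s, ¬ y < x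

/-- A valid greedy choice of the next element, given the previously chosen element `p`
(`none` at the start) and the set `s` of not-yet-chosen elements: the next element must
be minimal among the remaining elements and, moreover, if some element strictly above `p`
is minimal among the remaining elements, then the next element must be strictly above `p`
(i.e. it is a minimal element of `U(p)` that can extend the linear extension). -/
def GreedyNext [PartialOrder α] (p : Option α) (s : Finset α) (x : α) : Prop :=
  IsMinimalIn s x ∧
    ∀ q : α, p = some q → (∃ v ∈ s, q < v ∧ IsMinimalIn s v) → q < x

/-- The list is a valid greedy enumeration of the finite set `s`, the previously chosen
element being `p` (`none` at the start). -/
def GreedyFrom [PartialOrder α] [DecidableEq α] :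
    Option α → Finset α → List α → Prop
  | _, s, [] => s = ∅
  | p, s, x :: l => GreedyNext p s x ∧ GreedyFrom (some x) (s.erase x) l

/-- `l` is a greedy linear extension of the finite poset `α`, presented as the list of
its elements in increasing order. -/
def IsGreedyLE [PartialOrder α] [DecidableEq α] [Fintype α] (l : List α) : Prop :=
  GreedyFrom (none : Option α) Finset.univ l

/-- Delete the element `a` from a list, recording in the type that the remaining entries
are different from `a`; this realizes the operation `L ↦ L ∖ {a}`. -/
def delElt [DecidableEq α] (a : α) (l : List α) : List {z : α // z ≠ a} :=
  l.filterMap fun z => if h : z ≠ a then some ⟨z, h⟩ else none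

section Aux

variable [DecidableEq α] [PartialOrder α] {a : α}

@[simp] lemma greedyFrom_nil (p : Option α) (s : Finset α) :
    GreedyFrom p s [] ↔ s = ∅ := Iff.rfl

@[simp] lemma greedyFrom_cons (p : Option α) (s : Finset α) (x : α) (l : List α) :
    GreedyFrom p s (x :: l) ↔ GreedyNext p s x ∧ GreedyFrom (some x) (s.erase x) l := Iff.rfl

open Classical in
/-- Insert `a` immediately before the first element greater than `a`. -/
noncomputable def insA (a : α) : List α → List α
  | [] => [a]
  | w :: t => if a < w then a :: w :: t else w :: insA a t

lemma insA_nil : insA a [] = [a] := rfl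

open Classical in
lemma insA_cons (w : α) (t : List α) :
    insA a (w :: t) = if a < w then a :: w :: t else w :: insA a t := rfl

lemma greedy_mem : ∀ {l : List α} {p : Option α} {s : Finset α},
    GreedyFrom p s l → ∀ z ∈ l, z ∈ s := by
  intro l
  induction l with
  | nil => intro p s h z hz; simp at hz
  | cons x t ih =>
    intro p s h z hz
    rcases List.mem_cons.1 hz with rfl | hz
    · exact h.1.1.1
    · exact Finset.mem_of_mem_erase (ih h.2 z hz)

lemma min_erase_cases (hcov : ∀ b : α, a ⋖ b → ∀ u : α, u ≠ a → ¬ u < b)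
    (s : Finset α) (hab : ∀ z, a < z → z ∈ s)
    {v : α} (hv : IsMinimalIn (s.erase a) v) :
    IsMinimalIn s v ∨ ∀ u, u ≠ a → ¬ u < v := by
  by_cases hav : a < v
  · right
    have hcv : a ⋖ v := ⟨hav, fun z haz hzv =>
      hv.2 z (Finset.mem_erase.2 ⟨(ne_of_gt haz), hab z haz⟩) hzv⟩
    exact hcov v hcv
  · left
    refine ⟨Finset.mem_of_mem_erase hv.1, fun u hu hlt => ?_⟩
    rcases eq_or_ne u a with rfl | hua
    · exact hav hlt
    · exact hv.2 u (Finset.mem_erase.2 ⟨hua, hu⟩) hlt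

lemma exists_up_iff (hmin : IsMin a)
    (hcov : ∀ b : α, a ⋖ b → ∀ u : α, u ≠ a → ¬ u < b)
    (s : Finset α) (hab : ∀ z, a < z → z ∈ s)
    {q : α} (hqa : q ≠ a) :
    (∃ v ∈ s.erase a, q < v ∧ IsMinimalIn (s.erase a) v) ↔
      (∃ v ∈ s, q < v ∧ IsMinimalIn s v) := by
  constructor
  · rintro ⟨v, hv, hqv, hvm⟩
    rcases min_erase_cases hcov s hab hvm with h | h
    · exact ⟨v, Finset.mem_of_mem_erase hv, hqv, h⟩
    · exact absurd hqv (h q hqa)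
  · rintro ⟨v, hv, hqv, hvm⟩
    have hva : v ≠ a := fun h => hmin.not_lt (h ▸ hqv)
    exact ⟨v, Finset.mem_erase.2 ⟨hva, hv⟩, hqv,
      Finset.mem_erase.2 ⟨hva, hv⟩, fun u hu => hvm.2 u (Finset.mem_of_mem_erase hu)⟩

lemma greedy_filter (hmin : IsMin a)
    (hcov : ∀ b : α, a ⋖ b → ∀ u : α, u ≠ a → ¬ u < b) :
    ∀ (l : List α) (p : Option α) (s : Finset α), GreedyFrom p s l → a ∈ s →
      (∀ z, a < z → z ∈ s) → (∀ q, p = some q → q ≠ a) →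
      GreedyFrom p (s.erase a) (l.filter (fun z => z ≠ a)) := by
  intro l
  induction l with
  | nil =>
    intro p s h ha _ _
    rw [greedyFrom_nil] at h
    exact absurd (h ▸ ha) (Finset.notMem_empty a)
  | cons x t ih =>
    intro p s h ha hab hp
    obtain ⟨hn, hf⟩ := (greedyFrom_cons _ _ _ _).1 h
    by_cases hxa : x = a
    · subst hxa
      have hfc : (x :: t).filter (fun z => z ≠ x) = t.filter (fun z => z ≠ x) := by simp
      rw [hfc]
      cases t with
      | nil => exact hf
      | cons w t2 =>
        obtain ⟨hn2, hf2⟩ := (greedyFrom_cons _ _ _ _).1 hf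
        have hft : (w :: t2).filter (fun z => z ≠ x) = w :: t2 :=
          List.filter_eq_self.2 (fun z hz => by
            simpa using (Finset.mem_erase.1 (greedy_mem hf z hz)).1)
        rw [hft, greedyFrom_cons]
        refine ⟨⟨hn2.1, fun q hq hex => ?_⟩, hf2⟩
        have hqa := hp q hq
        have := (exists_up_iff hmin hcov s hab hqa).1 hex
        exact absurd (hn.2 q hq this) hmin.not_lt
    · have hax : ¬ a < x := hn.1.2 a ha
      have hfc : (x :: t).filter (fun z => z ≠ a)
          = x :: t.filter (fun z => z ≠ a) := by simp [hxa]
      rw [hfc, greedyFrom_cons]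
      constructor
      · exact ⟨⟨Finset.mem_erase.2 ⟨hxa, hn.1.1⟩,
          fun u hu => hn.1.2 u (Finset.mem_of_mem_erase hu)⟩,
          fun q hq hex => hn.2 q hq ((exists_up_iff hmin hcov s hab (hp q hq)).1 hex)⟩
      · have := ih (some x) (s.erase x) hf
          (Finset.mem_erase.2 ⟨Ne.symm hxa, ha⟩)
          (fun z hz => Finset.mem_erase.2 ⟨fun h' => hax (h' ▸ hz), hab z hz⟩)
          (fun q hq => by obtain rfl : x = q := Option.some.inj hq; exact hxa)
        rwa [Finset.erase_right_comm] at this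

lemma greedy_insA (hmin : IsMin a)
    (hcov : ∀ b : α, a ⋖ b → ∀ u : α, u ≠ a → ¬ u < b)
    (hex : ∃ z : α, a < z) :
    ∀ (l : List α) (p : Option α) (s : Finset α), GreedyFrom p s l → a ∉ s →
      (∀ z, a < z → z ∈ s) → (∀ q, p = some q → (q ≠ a ∧ ¬ a < q)) →
      GreedyFrom p (insert a s) (insA a l) := by
  intro l
  induction l with
  | nil =>
    intro p s h ha hab hp
    rw [greedyFrom_nil] at h
    obtain ⟨z, hz⟩ := hex
    exact absurd (h ▸ hab z hz) (Finset.notMem_empty z)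
  | cons w t ih =>
    intro p s h ha hab hp
    obtain ⟨hn, hf⟩ := (greedyFrom_cons _ _ _ _).1 h
    have hwa : w ≠ a := fun h' => ha (h' ▸ hn.1.1)
    have hes : (insert a s).erase a = s := Finset.erase_insert ha
    by_cases hlt : a < w
    · rw [insA_cons, if_pos hlt, greedyFrom_cons, greedyFrom_cons, hes]
      have hcw : a ⋖ w := ⟨hlt, fun z haz hzw => hn.1.2 z (hab z haz) hzw⟩
      refine ⟨⟨⟨Finset.mem_insert_self a s, fun u _ => hmin.not_lt⟩,
        fun q hq hexv => ?_⟩,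
        ⟨hn.1, fun q hq _ => by obtain rfl : a = q := Option.some.inj hq; exact hlt⟩, hf⟩
      obtain ⟨hqa, -⟩ := hp q hq
      obtain ⟨v, hv, hqv, hvm⟩ := hexv
      have hva : v ≠ a := fun h' => hmin.not_lt (h' ▸ hqv)
      have hvs : v ∈ s := (Finset.mem_insert.1 hv).resolve_left hva
      have hvm' : IsMinimalIn s v :=
        ⟨hvs, fun u hu => hvm.2 u (Finset.mem_insert_of_mem hu)⟩
      have hqw : q < w := hn.2 q hq ⟨v, hvs, hqv, hvm'⟩
      exact absurd hqw (hcov w hcw q hqa)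
    · rw [insA_cons, if_neg hlt, greedyFrom_cons]
      constructor
      · refine ⟨⟨Finset.mem_insert_of_mem hn.1.1, fun u hu => ?_⟩,
          fun q hq hexv => ?_⟩
        · rcases Finset.mem_insert.1 hu with rfl | hu
          · exact hlt
          · exact hn.1.2 u hu
        · obtain ⟨v, hv, hqv, hvm⟩ := hexv
          have hva : v ≠ a := fun h' => hmin.not_lt (h' ▸ hqv)
          have hvs : v ∈ s := (Finset.mem_insert.1 hv).resolve_left hva
          exact hn.2 q hq ⟨v, hvs, hqv,
            ⟨hvs, fun u hu => hvm.2 u (Finset.mem_insert_of_mem hu)⟩⟩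
      · rw [Finset.erase_insert_of_ne (Ne.symm hwa)]
        exact ih (some w) (s.erase w) hf
          (fun h' => ha (Finset.mem_of_mem_erase h'))
          (fun z hz => Finset.mem_erase.2 ⟨fun h' => hlt (h' ▸ hz), hab z hz⟩)
          (fun q hq => by obtain rfl : w = q := Option.some.inj hq; exact ⟨hwa, hlt⟩)

lemma greedy_canon (hmin : IsMin a)
    (hcov : ∀ b : α, a ⋖ b → ∀ u : α, u ≠ a → ¬ u < b)
    (hex : ∃ z : α, a < z) :
    ∀ (l : List α) (p : Option α) (s : Finset α), GreedyFrom p s l → a ∈ s →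
      (∀ z, a < z → z ∈ s) → l = insA a (l.filter (fun z => z ≠ a)) := by
  intro l
  induction l with
  | nil =>
    intro p s h ha _
    rw [greedyFrom_nil] at h
    exact absurd (h ▸ ha) (Finset.notMem_empty a)
  | cons x t ih =>
    intro p s h ha hab
    obtain ⟨hn, hf⟩ := (greedyFrom_cons _ _ _ _).1 h
    by_cases hxa : x = a
    · subst hxa
      cases t with
      | nil =>
        rw [greedyFrom_nil] at hf
        obtain ⟨z, hz⟩ := hex
        have hzm : z ∈ s.erase x := Finset.mem_erase.2 ⟨ne_of_gt hz, hab z hz⟩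
        exact absurd (hf ▸ hzm) (Finset.notMem_empty z)
      | cons w t2 =>
        obtain ⟨hn2, hf2⟩ := (greedyFrom_cons _ _ _ _).1 hf
        classical
        have hTne : ((s.erase x).filter (fun z => x < z)).Nonempty := by
          obtain ⟨z, hz⟩ := hex
          exact ⟨z, Finset.mem_filter.2 ⟨Finset.mem_erase.2 ⟨ne_of_gt hz, hab z hz⟩, hz⟩⟩
        obtain ⟨v, hvT, hvmin⟩ : ∃ v ∈ (s.erase x).filter (fun z => x < z),
            ∀ z ∈ (s.erase x).filter (fun z => x < z), ¬ z < v := by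
          obtain ⟨v, hv⟩ := Finset.exists_minimal hTne
          exact ⟨v, hv.1, fun z hz hlt => hv.not_lt hz hlt⟩
        obtain ⟨hvE, hav⟩ := Finset.mem_filter.1 hvT
        have hcv : x ⋖ v := ⟨hav, fun z haz hzv =>
          hvmin z (Finset.mem_filter.2
            ⟨Finset.mem_erase.2 ⟨ne_of_gt haz, hab z haz⟩, haz⟩) hzv⟩
        have hvm : IsMinimalIn (s.erase x) v := ⟨hvE, fun u hu hlt =>
          hcov v hcv u (Finset.mem_erase.1 hu).1 hlt⟩
        have haw : x < w := hn2.2 x rfl ⟨v, hvE, hav, hvm⟩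
        have hft : (w :: t2).filter (fun z => z ≠ x) = w :: t2 :=
          List.filter_eq_self.2 (fun z hz => by
            simpa using (Finset.mem_erase.1 (greedy_mem hf z hz)).1)
        have hfc : (x :: w :: t2).filter (fun z => z ≠ x)
            = (w :: t2).filter (fun z => z ≠ x) := by simp
        rw [hfc, hft, insA_cons, if_pos haw]
    · have hax : ¬ a < x := hn.1.2 a ha
      have hfc : (x :: t).filter (fun z => z ≠ a)
          = x :: t.filter (fun z => z ≠ a) := by simp [hxa]
      rw [hfc, insA_cons, if_neg hax]
      have := ih (some x) (s.erase x) hf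
        (Finset.mem_erase.2 ⟨Ne.symm hxa, ha⟩)
        (fun z hz => Finset.mem_erase.2 ⟨fun h' => hax (h' ▸ hz), hab z hz⟩)
      exact congrArg (fun u => x :: u) this

lemma filter_insA : ∀ l : List α, a ∉ l →
    (insA a l).filter (fun z => z ≠ a) = l := by
  intro l
  induction l with
  | nil => intro _; simp [insA_nil]
  | cons w t ih =>
    intro hal
    have hwa : w ≠ a := fun h' => hal (h' ▸ (List.mem_cons_self : w ∈ w :: t))
    have hat : a ∉ t := fun h' => hal (List.mem_cons_of_mem w h')
    have hwt : (w :: t).filter (fun z => z ≠ a) = w :: t :=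
      List.filter_eq_self.2 (fun z hz => by
        simp only [decide_eq_true_eq]
        rintro rfl; exact hal hz)
    by_cases hlt : a < w
    · rw [insA_cons, if_pos hlt]
      calc (a :: w :: t).filter (fun z => z ≠ a)
          = (w :: t).filter (fun z => z ≠ a) := by simp
        _ = w :: t := hwt
    · rw [insA_cons, if_neg hlt]
      have : (w :: insA a t).filter (fun z => z ≠ a)
          = w :: (insA a t).filter (fun z => z ≠ a) := by simp [hwa]
      rw [this, ih hat]

lemma indexOf_filter_lt_iff {x y : α} (hx : x ≠ a) (hy : y ≠ a) :
    ∀ l : List α,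
      ((l.filter (fun z => z ≠ a)).idxOf x < (l.filter (fun z => z ≠ a)).idxOf y ↔
        l.idxOf x < l.idxOf y) := by
  intro l
  induction l with
  | nil => simp
  | cons w t ih =>
    by_cases hwa : w = a
    · subst hwa
      have hfc : (w :: t).filter (fun z => z ≠ w) = t.filter (fun z => z ≠ w) := by simp
      rw [hfc, List.idxOf_cons_ne t (Ne.symm hx), List.idxOf_cons_ne t (Ne.symm hy)]
      rw [ih]
      exact (Nat.succ_lt_succ_iff).symm
    · have hfc : (w :: t).filter (fun z => z ≠ a)
          = w :: t.filter (fun z => z ≠ a) := by simp [hwa]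
      rw [hfc]
      by_cases hxw : x = w
      · subst hxw
        rw [List.idxOf_cons_self, List.idxOf_cons_self]
        by_cases hyw : y = x
        · subst hyw
          rw [List.idxOf_cons_self, List.idxOf_cons_self]
        · rw [List.idxOf_cons_ne _ (Ne.symm hyw), List.idxOf_cons_ne _ (Ne.symm hyw)]
          simp [Nat.succ_pos]
      · rw [List.idxOf_cons_ne _ (Ne.symm hxw), List.idxOf_cons_ne _ (Ne.symm hxw)]
        by_cases hyw : y = w
        · subst hyw
          rw [List.idxOf_cons_self, List.idxOf_cons_self]
          simp
        · rw [List.idxOf_cons_ne _ (Ne.symm hyw), List.idxOf_cons_ne _ (Ne.symm hyw)]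
          rw [Nat.succ_lt_succ_iff, Nat.succ_lt_succ_iff]
          exact ih

lemma isMinimalIn_map {s : Finset {z : α // z ≠ a}} {x : {z : α // z ≠ a}} :
    IsMinimalIn (s.map (Function.Embedding.subtype _)) x.val ↔ IsMinimalIn s x := by
  constructor
  · rintro ⟨hm, hmin⟩
    refine ⟨(Finset.mem_map' _).1 hm, fun y hy hlt => hmin y.val ?_ (Subtype.coe_lt_coe.2 hlt)⟩
    exact (Finset.mem_map' (Function.Embedding.subtype _)).2 hy
  · rintro ⟨hm, hmin⟩
    refine ⟨(Finset.mem_map' _).2 hm, fun y hy hlt => ?_⟩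
    simp only [Finset.mem_map, Function.Embedding.coe_subtype] at hy
    obtain ⟨y', hy', rfl⟩ := hy
    exact hmin y' hy' (Subtype.coe_lt_coe.1 hlt)

lemma greedyNext_map {p : Option {z : α // z ≠ a}} {s : Finset {z : α // z ≠ a}}
    {x : {z : α // z ≠ a}} :
    GreedyNext (p.map Subtype.val) (s.map (Function.Embedding.subtype _)) x.val ↔
      GreedyNext p s x := by
  constructor
  · rintro ⟨h1, h2⟩
    refine ⟨isMinimalIn_map.1 h1, fun q hq hexv => ?_⟩
    have hpm : p.map Subtype.val = some q.val := by rw [hq]; rfl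
    refine Subtype.coe_lt_coe.1 (h2 q.val hpm ?_)
    obtain ⟨v, hv, hqv, hvm⟩ := hexv
    exact ⟨v.val, (Finset.mem_map' _).2 hv, Subtype.coe_lt_coe.2 hqv, isMinimalIn_map.2 hvm⟩
  · rintro ⟨h1, h2⟩
    refine ⟨isMinimalIn_map.2 h1, fun q hq hexv => ?_⟩
    cases p with
    | none => exact absurd hq (by simp)
    | some q' =>
      obtain rfl : q'.val = q := by simpa using hq
      obtain ⟨v, hv, hqv, hvm⟩ := hexv
      simp only [Finset.mem_map, Function.Embedding.coe_subtype] at hv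
      obtain ⟨v', hv', rfl⟩ := hv
      exact Subtype.coe_lt_coe.2 (h2 q' rfl
        ⟨v', hv', Subtype.coe_lt_coe.1 hqv,
          isMinimalIn_map.1 (by exact hvm)⟩)

lemma greedyFrom_map_val :
    ∀ (l : List {z : α // z ≠ a}) (p : Option {z : α // z ≠ a})
      (s : Finset {z : α // z ≠ a}),
      GreedyFrom p s l ↔
        GreedyFrom (p.map Subtype.val) (s.map (Function.Embedding.subtype _))
          (l.map Subtype.val) := by
  intro l
  induction l with
  | nil =>
    intro p s
    rw [List.map_nil, greedyFrom_nil, greedyFrom_nil, Finset.map_eq_empty]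
  | cons x t ih =>
    intro p s
    rw [List.map_cons, greedyFrom_cons, greedyFrom_cons]
    have he : (s.erase x).map (Function.Embedding.subtype _)
        = (s.map (Function.Embedding.subtype (fun z => z ≠ a))).erase x.val :=
      Finset.map_erase _ s x
    rw [← he, greedyNext_map]
    constructor
    · rintro ⟨h1, h2⟩
      exact ⟨h1, (ih (some x) (s.erase x)).1 h2⟩
    · rintro ⟨h1, h2⟩
      exact ⟨h1, (ih (some x) (s.erase x)).2 h2⟩

lemma univ_map_subtype [Fintype α] :
    (Finset.univ : Finset {z : α // z ≠ a}).map (Function.Embedding.subtype _)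
      = Finset.univ.erase a := by
  ext z
  constructor
  · intro h
    obtain ⟨z', -, rfl⟩ := Finset.mem_map.1 h
    exact Finset.mem_erase.2 ⟨z'.2, Finset.mem_univ _⟩
  · intro h
    exact Finset.mem_map.2 ⟨⟨z, (Finset.mem_erase.1 h).1⟩, Finset.mem_univ _, rfl⟩

lemma delElt_map_val (l : List α) :
    (delElt a l).map Subtype.val = l.filter (fun z => z ≠ a) := by
  induction l with
  | nil => rfl
  | cons w t ih =>
    simp only [delElt, List.filterMap_cons] at ih ⊢
    by_cases hwa : w = a
    · subst hwa
      rw [dif_neg (by simp), List.filter_cons_of_neg (by simp)]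
      exact ih
    · rw [dif_pos hwa, List.filter_cons_of_pos (by simp [hwa]), List.map_cons]
      rw [ih]

lemma indexOf_map_val (x : {z : α // z ≠ a}) :
    ∀ l : List {z : α // z ≠ a}, (l.map Subtype.val).idxOf x.val = l.idxOf x := by
  intro l
  induction l with
  | nil => rfl
  | cons w t ih =>
    by_cases h : w = x
    · subst h
      rw [List.map_cons, List.idxOf_cons_self, List.idxOf_cons_self]
    · have h' : w.val ≠ x.val := fun he => h (Subtype.ext he)
      rw [List.map_cons, List.idxOf_cons_ne _ h', List.idxOf_cons_ne _ h]
      rw [ih]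

end Aux


/-- Let `P` be a finite ordered set with a minimal element `a` which is not maximal and
such that every upper cover of `a` is minimal in `P ∖ {a}`, and let `x`, `y` be two
incomparable elements of `P ∖ {a}`.  Then the map `L ↦ L ∖ {a}` is a bijection from the
set of greedy linear extensions of `P` putting `x` before `y` onto the set of greedy
linear extensions of `P ∖ {a}` putting `x` before `y`. -/
theorem bijOn_delElt_greedy [Fintype α] [DecidableEq α] [PartialOrder α]
    (a : α) (hmin : IsMin a) (hmax : ¬ IsMax a)
    (hcov : ∀ b : α, a ⋖ b → ∀ u : α, u ≠ a → ¬ u < b)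
    (x y : α) (hx : x ≠ a) (hy : y ≠ a) (hxy : ¬ x ≤ y) (hyx : ¬ y ≤ x) :
    Set.BijOn (delElt a)
      {l : List α | IsGreedyLE l ∧ l.idxOf x < l.idxOf y}
      {l : List {z : α // z ≠ a} |
        IsGreedyLE l ∧ l.idxOf ⟨x, hx⟩ < l.idxOf ⟨y, hy⟩} := by
  classical
  have hex : ∃ z : α, a < z := not_isMax_iff.1 hmax
  refine ⟨?_, ?_, ?_⟩
  · -- MapsTo
    rintro l ⟨hg, hidx⟩
    refine ⟨?_, ?_⟩
    · show GreedyFrom _ _ _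
      refine (greedyFrom_map_val (delElt a l) none Finset.univ).2 ?_
      rw [univ_map_subtype, delElt_map_val]
      exact greedy_filter hmin hcov l none Finset.univ hg (Finset.mem_univ a)
        (fun z _ => Finset.mem_univ z) (fun q hq => by cases hq)
    · show (delElt a l).idxOf ⟨x, hx⟩ < (delElt a l).idxOf ⟨y, hy⟩
      rw [← indexOf_map_val ⟨x, hx⟩ (delElt a l), ← indexOf_map_val ⟨y, hy⟩ (delElt a l),
        delElt_map_val]
      exact (indexOf_filter_lt_iff hx hy l).2 hidx
  · -- InjOn
    rintro l1 ⟨hg1, -⟩ l2 ⟨hg2, -⟩ heq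
    have hfe : l1.filter (fun z => z ≠ a) = l2.filter (fun z => z ≠ a) := by
      rw [← delElt_map_val, ← delElt_map_val, heq]
    have h1 := greedy_canon hmin hcov hex l1 none Finset.univ hg1 (Finset.mem_univ a)
      (fun z _ => Finset.mem_univ z)
    have h2 := greedy_canon hmin hcov hex l2 none Finset.univ hg2 (Finset.mem_univ a)
      (fun z _ => Finset.mem_univ z)
    rw [h1, h2, hfe]
  · -- SurjOn
    rintro l' ⟨hg', hidx'⟩
    set m := l'.map Subtype.val with hm_def
    have ham : a ∉ m := fun h => by
      obtain ⟨z, -, hz⟩ := List.mem_map.1 h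
      exact z.2 hz
    have hm : GreedyFrom none (Finset.univ.erase a) m := by
      have := (greedyFrom_map_val l' none Finset.univ).1 hg'
      rwa [univ_map_subtype] at this
    have hg : GreedyFrom none Finset.univ (insA a m) := by
      have := greedy_insA hmin hcov hex m none (Finset.univ.erase a) hm
        (Finset.notMem_erase a _)
        (fun z hz => Finset.mem_erase.2 ⟨ne_of_gt hz, Finset.mem_univ z⟩)
        (fun q hq => by cases hq)
      rwa [Finset.insert_erase (Finset.mem_univ a)] at this
    have hfilter : (insA a m).filter (fun z => z ≠ a) = m := filter_insA m ham
    have hdel : delElt a (insA a m) = l' := by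
      apply List.map_injective_iff.2 Subtype.val_injective
      rw [delElt_map_val, hfilter]
    have hidxm : m.idxOf x < m.idxOf y := by
      rw [hm_def, indexOf_map_val ⟨x, hx⟩ l', indexOf_map_val ⟨y, hy⟩ l']
      exact hidx'
    refine ⟨insA a m, ⟨hg, ?_⟩, hdel⟩
    exact (indexOf_filter_lt_iff hx hy (insA a m)).1 (by rw [hfilter]; exact hidxm)
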